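/- Let q ∈ (0,1] and let n be a nonnegative integer. Every monomial u^α v^β with nonnegative integers α, β satisfying α + β ≤ n lies in the real linear span of the triangular q-Bernstein polynomials {B^n_{ijk}(u,v) : i, j, k ≥ 0, i + j + k = n}. -/
import Mathlib


open Finset

/-- The q-integer [r] = 1 + q + ... + q^(r-1). -/
noncomputable def qInt (q : ℝ) (r : ℕ) : ℝ := ∑ s ∈ Finset.range r, q ^ s

/-- The q-factorial [r]!. -/
noncomputable def qFact (q : ℝ) : ℕ → ℝ
  | 0 => 1
  | r + 1 => qInt q (r + 1) * qFact q r

/-- The q-binomial coefficient [i choose j]_q (zero unless i ≥ j ≥ 0). -/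
noncomputable def qBinom (q : ℝ) (i j : ℕ) : ℝ :=
  if j ≤ i then qFact q i / (qFact q j * qFact q (i - j)) else 0

/-- The q-binomial coefficient with integer indices, zero unless i ≥ j ≥ 0. -/
noncomputable def qBinomZ (q : ℝ) (i j : ℤ) : ℝ :=
  if 0 ≤ j ∧ j ≤ i then qFact q i.toNat / (qFact q j.toNat * qFact q (i - j).toNat) else 0

/-- The triangular q-Bernstein polynomial B^n_{ijk}(u,v)
    (meaningful for i + j + k = n). -/
noncomputable def triB (q : ℝ) (n i j k : ℕ) (u v : ℝ) : ℝ :=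
  qBinom q n k * (Nat.choose (i + j) i : ℝ) * u ^ i * v ^ j *
    ∏ s ∈ Finset.range k, (1 - q ^ s * u - q ^ s * v)

/-- The triangular q-Bernstein polynomial with integer indices; by convention it is
    zero whenever any of the indices is negative. -/
noncomputable def triBZ (q : ℝ) (n : ℕ) (i j k : ℤ) (u v : ℝ) : ℝ :=
  if 0 ≤ i ∧ 0 ≤ j ∧ 0 ≤ k then triB q n i.toNat j.toNat k.toNat u v else 0

/-- The classical triangular Bernstein polynomial b^n_{ijk}(u,v). -/
noncomputable def triBern (n i j k : ℕ) (u v : ℝ) : ℝ :=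
  (Nat.factorial n : ℝ) /
      ((Nat.factorial i : ℝ) * (Nat.factorial j : ℝ) * (Nat.factorial k : ℝ)) *
    u ^ i * v ^ j * (1 - u - v) ^ k

/-- The set of triples (i, j, k) of nonnegative integers with i + j + k = n. -/
def simplex (n : ℕ) : Finset (ℕ × ℕ × ℕ) :=
  (Finset.range (n + 1) ×ˢ Finset.range (n + 1) ×ˢ Finset.range (n + 1)).filter
    (fun p => p.1 + p.2.1 + p.2.2 = n)

/-- Monomial u^a v^b as a function on ℝ × ℝ. -/
noncomputable def mono2 (a b : ℕ) : ℝ × ℝ → ℝ := fun uv => uv.1 ^ a * uv.2 ^ b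

/-- The (rescaled) q-Bernstein function u^a v^b ∏_{s<k}(1 - q^s u - q^s v). -/
noncomputable def pf (q : ℝ) (k a b : ℕ) : ℝ × ℝ → ℝ :=
  fun uv => uv.1 ^ a * uv.2 ^ b * ∏ s ∈ Finset.range k, (1 - q ^ s * uv.1 - q ^ s * uv.2)

lemma qInt_pos {q : ℝ} (hq : 0 < q) {r : ℕ} (hr : 0 < r) : 0 < qInt q r := by
  unfold qInt
  exact Finset.sum_pos (fun s _ => pow_pos hq s) (Finset.nonempty_range_iff.mpr hr.ne')

lemma qFact_pos {q : ℝ} (hq : 0 < q) (r : ℕ) : 0 < qFact q r := by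
  induction r with
  | zero => simp [qFact]
  | succ r ih => exact mul_pos (qInt_pos hq (Nat.succ_pos r)) ih

lemma qBinom_pos {q : ℝ} (hq : 0 < q) {n k : ℕ} (h : k ≤ n) : 0 < qBinom q n k := by
  unfold qBinom
  rw [if_pos h]
  exact div_pos (qFact_pos hq n) (mul_pos (qFact_pos hq k) (qFact_pos hq (n - k)))

/-- Set of monomials of total degree in (lo, hi]. -/
def monoSet (lo hi : ℕ) : Set (ℝ × ℝ → ℝ) :=
  {f | ∃ a b : ℕ, lo < a + b ∧ a + b ≤ hi ∧ f = mono2 a b}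

lemma monoSet_mono {lo hi lo' hi' : ℕ} (h1 : lo' ≤ lo) (h2 : hi ≤ hi') :
    monoSet lo hi ⊆ monoSet lo' hi' := by
  rintro f ⟨a, b, hab1, hab2, rfl⟩
  exact ⟨a, b, lt_of_le_of_lt h1 hab1, hab2.trans h2, rfl⟩

lemma pf_succ (q : ℝ) (k a b : ℕ) :
    pf q (k + 1) a b = pf q k a b - q ^ k • pf q k (a + 1) b - q ^ k • pf q k a (b + 1) := by
  funext uv
  simp only [pf, Finset.prod_range_succ, Pi.sub_apply, Pi.smul_apply, smul_eq_mul]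
  ring

lemma diff_mem (q : ℝ) (k : ℕ) : ∀ a b : ℕ,
    pf q k a b - mono2 a b ∈ Submodule.span ℝ (monoSet (a + b) (a + b + k)) := by
  induction k with
  | zero =>
    intro a b
    have h : pf q 0 a b = mono2 a b := by funext uv; simp [pf, mono2]
    rw [h, sub_self]; exact Submodule.zero_mem _
  | succ k ih =>
    intro a b
    rw [pf_succ]
    have e : pf q k a b - q ^ k • pf q k (a + 1) b - q ^ k • pf q k a (b + 1) - mono2 a b
        = (pf q k a b - mono2 a b)
          - q ^ k • (pf q k (a + 1) b - mono2 (a + 1) b)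
          - q ^ k • (pf q k a (b + 1) - mono2 a (b + 1))
          - q ^ k • mono2 (a + 1) b - q ^ k • mono2 a (b + 1) := by
      simp only [smul_sub]; abel
    rw [e]
    refine sub_mem (sub_mem (sub_mem (sub_mem ?_ (Submodule.smul_mem _ _ ?_))
      (Submodule.smul_mem _ _ ?_)) (Submodule.smul_mem _ _ ?_)) (Submodule.smul_mem _ _ ?_)
    · exact Submodule.span_mono (monoSet_mono le_rfl (by omega)) (ih a b)
    · exact Submodule.span_mono (monoSet_mono (by omega) (by omega)) (ih (a + 1) b)
    · exact Submodule.span_mono (monoSet_mono (by omega) (by omega)) (ih a (b + 1))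
    · exact Submodule.subset_span ⟨a + 1, b, by omega, by omega, rfl⟩
    · exact Submodule.subset_span ⟨a, b + 1, by omega, by omega, rfl⟩

lemma pf_mem_span (q : ℝ) (hq0 : 0 < q) (n a b : ℕ) (hab : a + b ≤ n) :
    pf q (n - a - b) a b ∈ Submodule.span ℝ
      (Set.range (fun p : simplex n => fun uv : ℝ × ℝ =>
        triB q n p.1.1 p.1.2.1 p.1.2.2 uv.1 uv.2)) := by
  set k := n - a - b with hkdef
  have hk : a + b + k = n := by omega
  have hc : qBinom q n k * (Nat.choose (a + b) a : ℝ) ≠ 0 := by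
    have h1 := qBinom_pos hq0 (show k ≤ n by omega)
    have h2 : (0 : ℝ) < (Nat.choose (a + b) a : ℝ) := by
      exact_mod_cast Nat.choose_pos (Nat.le_add_right a b)
    exact (mul_pos h1 h2).ne'
  have hmem : (a, b, k) ∈ simplex n := by
    simp only [simplex, Finset.mem_filter, Finset.mem_product, Finset.mem_range]
    omega
  have heq : (fun uv : ℝ × ℝ => triB q n a b k uv.1 uv.2)
      = (qBinom q n k * (Nat.choose (a + b) a : ℝ)) • pf q k a b := by
    funext uv
    simp only [triB, pf, Pi.smul_apply, smul_eq_mul]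
    ring
  have ht : (fun uv : ℝ × ℝ => triB q n a b k uv.1 uv.2) ∈ Submodule.span ℝ
      (Set.range (fun p : simplex n => fun uv : ℝ × ℝ =>
        triB q n p.1.1 p.1.2.1 p.1.2.2 uv.1 uv.2)) :=
    Submodule.subset_span ⟨⟨(a, b, k), hmem⟩, rfl⟩
  have h2 := Submodule.smul_mem _ ((qBinom q n k * (Nat.choose (a + b) a : ℝ))⁻¹) ht
  rwa [heq, inv_smul_smul₀ hc] at h2

/-- every monomial of total degree ≤ n lies in the span of the triangular
    q-Bernstein polynomials of degree n. -/
theorem stmt8 (q : ℝ) (hq0 : 0 < q) (hq1 : q ≤ 1) (n : ℕ)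
    (α β : ℕ) (hαβ : α + β ≤ n) :
    (fun uv : ℝ × ℝ => uv.1 ^ α * uv.2 ^ β) ∈
      Submodule.span ℝ
        (Set.range (fun p : simplex n => fun uv : ℝ × ℝ =>
          triB q n p.1.1 p.1.2.1 p.1.2.2 uv.1 uv.2)) := by
  have key : ∀ d : ℕ, ∀ a b : ℕ, a + b ≤ n → n - (a + b) ≤ d →
      mono2 a b ∈ Submodule.span ℝ
        (Set.range (fun p : simplex n => fun uv : ℝ × ℝ =>
          triB q n p.1.1 p.1.2.1 p.1.2.2 uv.1 uv.2)) := by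
    intro d
    induction d with
    | zero =>
      intro a b h1 h2
      have h3 : n - a - b = 0 := by omega
      have hp := pf_mem_span q hq0 n a b h1
      rw [h3] at hp
      have e : pf q 0 a b = mono2 a b := by funext uv; simp [pf, mono2]
      rwa [e] at hp
    | succ d ih =>
      intro a b h1 h2
      have hpf := pf_mem_span q hq0 n a b h1
      have hdiff := diff_mem q (n - a - b) a b
      have hd : pf q (n - a - b) a b - mono2 a b ∈ Submodule.span ℝ
          (Set.range (fun p : simplex n => fun uv : ℝ × ℝ =>
            triB q n p.1.1 p.1.2.1 p.1.2.2 uv.1 uv.2)) := by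
        refine Submodule.span_le.mpr ?_ hdiff
        rintro f ⟨a', b', hab1, hab2, rfl⟩
        exact ih a' b' (by omega) (by omega)
      have e : mono2 a b = pf q (n - a - b) a b - (pf q (n - a - b) a b - mono2 a b) := by
        abel
      rw [e]
      exact sub_mem hpf hd
  exact key n α β hαβ (by omega)
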